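/- arXiv:2501.12888 — 2 statements merged into one kernel-verified Lean document; each statement's English description precedes it below -/
import Mathlib

section
/- Let X be a CW complex with skeleta X^n, Y a space, and f, g : X^n → Y two cellular maps with f|_{X^{n-1}} = g|_{X^{n-1}}. For each n-cell σ of X with characteristic map Φ_σ : D^n → X, the map on S^n obtained by gluing f∘Φ_σ and g∘Φ_σ along their common boundary restriction defines an element d^n(f,g)(σ) ∈ π_n(Y). If f and g are homotopic relative to X^{n-1}, then d^n(f,g)(σ) = 0 for every n-cell σ. -/
open Metric

def dropLast (n : ℕ) (z : EuclideanSpace ℝ (Fin (n + 1))) : EuclideanSpace ℝ (Fin n) :=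
  WithLp.toLp 2 (fun i : Fin n => z i.castSucc)

lemma dropLast_continuous (n : ℕ) : Continuous (dropLast n) := by
  unfold dropLast
  exact (PiLp.continuous_toLp 2 _).comp (continuous_pi fun i =>
    (continuous_apply _).comp (PiLp.continuous_ofLp 2 _))

lemma norm_dropLast (n : ℕ) (z : EuclideanSpace ℝ (Fin (n + 1))) (hz : ‖z‖ = 1)
    (h0 : z (Fin.last n) = 0) : ‖dropLast n z‖ = 1 := by
  rw [EuclideanSpace.norm_eq] at hz ⊢
  rw [Fin.sum_univ_castSucc] at hz
  simp only [h0, norm_zero, ne_eq, OfNat.ofNat_ne_zero, not_false_eq_true, zero_pow,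
    add_zero] at hz
  simpa [dropLast] using hz

/-- let `f, g : X → Y` agree on `A` (playing the role of `X^{n-1}`), let
`Φ` be the characteristic map of an `n`-cell `σ` with attaching sphere mapped into `A`,
and let `k : Sⁿ → Y` be the map obtained by gluing `f∘Φ` (upper hemisphere) and `g∘Φ`
(lower hemisphere), representing `dⁿ(f,g)(σ) ∈ πₙ(Y)`. If `f` and `g` are homotopic
relative to `A`, then `k` is null-homotopic, i.e. `dⁿ(f,g)(σ) = 0`. -/
theorem stmt_11 (n : ℕ) (X Y : Type) [TopologicalSpace X] [TopologicalSpace Y]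
    (A : Set X) (f g : C(X, Y)) (hfg : ∀ a ∈ A, f a = g a)
    (Φ : C(EuclideanSpace ℝ (Fin n), X))
    (hΦ : ∀ x : EuclideanSpace ℝ (Fin n), ‖x‖ = 1 → Φ x ∈ A)
    (k : C(sphere (0 : EuclideanSpace ℝ (Fin (n + 1))) 1, Y))
    (hk₁ : ∀ z : sphere (0 : EuclideanSpace ℝ (Fin (n + 1))) 1,
      0 ≤ (z : EuclideanSpace ℝ (Fin (n + 1))) (Fin.last n) → k z = f (Φ (dropLast n z)))
    (hk₂ : ∀ z : sphere (0 : EuclideanSpace ℝ (Fin (n + 1))) 1,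
      (z : EuclideanSpace ℝ (Fin (n + 1))) (Fin.last n) ≤ 0 → k z = g (Φ (dropLast n z)))
    (hrel : Nonempty (ContinuousMap.HomotopyRel f g A)) :
    ∃ y : Y, k.Homotopic (ContinuousMap.const _ y) := by
  obtain ⟨H⟩ := hrel
  have hcont : Continuous fun z : sphere (0 : EuclideanSpace ℝ (Fin (n + 1))) 1 =>
      f (Φ (dropLast n (z : EuclideanSpace ℝ (Fin (n+1))))) :=
    f.continuous.comp (Φ.continuous.comp ((dropLast_continuous n).comp continuous_subtype_val))
  let k' : C(sphere (0 : EuclideanSpace ℝ (Fin (n + 1))) 1, Y) :=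
    ⟨fun z => f (Φ (dropLast n (z : EuclideanSpace ℝ (Fin (n+1))))), hcont⟩
  have step1 : k.Homotopic k' := by
    refine ⟨{
      toFun := fun p => if (0:ℝ) ≤ (p.2 : EuclideanSpace ℝ (Fin (n+1))) (Fin.last n)
        then f (Φ (dropLast n (p.2 : EuclideanSpace ℝ (Fin (n+1)))))
        else H (unitInterval.symm p.1, Φ (dropLast n (p.2 : EuclideanSpace ℝ (Fin (n+1)))))
      continuous_toFun := ?_
      map_zero_left := ?_
      map_one_left := ?_ }⟩
    · apply Continuous.if_le
      · exact f.continuous.comp (Φ.continuous.comp ((dropLast_continuous n).comp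
          (continuous_subtype_val.comp continuous_snd)))
      · exact H.continuous.comp (Continuous.prodMk
          (unitInterval.continuous_symm.comp continuous_fst)
          (Φ.continuous.comp ((dropLast_continuous n).comp
            (continuous_subtype_val.comp continuous_snd))))
      · exact continuous_const
      · exact ((continuous_apply (Fin.last n)).comp ((PiLp.continuous_ofLp 2 _).comp
          (continuous_subtype_val.comp continuous_snd)))
      · intro p hp
        have hz : ‖(p.2 : EuclideanSpace ℝ (Fin (n+1)))‖ = 1 := by
          simpa [mem_sphere_iff_norm] using p.2.2
        have hA : Φ (dropLast n (p.2 : EuclideanSpace ℝ (Fin (n+1)))) ∈ A :=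
          hΦ _ (norm_dropLast n _ hz hp.symm)
        rw [H.eq_fst _ hA]
    · intro z
      show (if (0:ℝ) ≤ (z : EuclideanSpace ℝ (Fin (n+1))) (Fin.last n)
        then f (Φ (dropLast n (z : EuclideanSpace ℝ (Fin (n+1)))))
        else H (unitInterval.symm 0, Φ (dropLast n (z : EuclideanSpace ℝ (Fin (n+1)))))) = k z
      by_cases h : (0:ℝ) ≤ (z : EuclideanSpace ℝ (Fin (n+1))) (Fin.last n)
      · rw [if_pos h]; exact (hk₁ z h).symm
      · rw [if_neg h]
        rw [unitInterval.symm_zero, H.apply_one]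
        exact (hk₂ z (not_le.mp h).le).symm
    · intro z
      show (if (0:ℝ) ≤ (z : EuclideanSpace ℝ (Fin (n+1))) (Fin.last n)
        then f (Φ (dropLast n (z : EuclideanSpace ℝ (Fin (n+1)))))
        else H (unitInterval.symm 1, Φ (dropLast n (z : EuclideanSpace ℝ (Fin (n+1)))))) = k' z
      by_cases h : (0:ℝ) ≤ (z : EuclideanSpace ℝ (Fin (n+1))) (Fin.last n)
      · rw [if_pos h]; rfl
      · rw [if_neg h, unitInterval.symm_one, H.apply_zero]; rfl
  have step2 : k'.Homotopic (ContinuousMap.const _ (f (Φ 0))) := by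
    refine ⟨{
      toFun := fun p => f (Φ (((unitInterval.symm p.1 : ℝ)) •
        dropLast n (p.2 : EuclideanSpace ℝ (Fin (n+1)))))
      continuous_toFun := ?_
      map_zero_left := ?_
      map_one_left := ?_ }⟩
    · exact f.continuous.comp (Φ.continuous.comp (Continuous.smul
        (continuous_subtype_val.comp (unitInterval.continuous_symm.comp continuous_fst))
        ((dropLast_continuous n).comp (continuous_subtype_val.comp continuous_snd))))
    · intro z
      show f (Φ (((unitInterval.symm 0 : unitInterval) : ℝ) • dropLast n _)) = k' z
      simp [k']
    · intro z
      show f (Φ (((unitInterval.symm 1 : unitInterval) : ℝ) • dropLast n _)) = _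
      simp
  exact ⟨f (Φ 0), step1.trans step2⟩
end

section
/- Let K and L be simplicial complexes and f : dom(K) → dom(L) a simplicial map. Suppose every compact subset of |L| meets only finitely many closed simplices, each of which is compact, and suppose that for every simplex τ of L the preimage {σ ∈ K : f(σ) ⊆ τ} is finite. Then |f| : |K| → |L| is a proper map (preimages of compact sets are compact). In particular, a simplicial map between locally finite countable complexes such that each vertex of L has finite preimage induces a proper map of geometric realizations. -/
/-- An abstract simplicial complex on a vertex type `V`. -/
structure AbsSimplicialComplex (V : Type) where
  faces : Set (Finset V)
  down_closed : ∀ ⦃s⦄, s ∈ faces → ∀ ⦃t⦄, t ⊆ s → t ∈ faces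

/-- The geometric realization `|K| ⊆ ℝ^ℕ` of a countable simplicial complex with
vertices in `ℕ`. -/
def geomRealization (K : AbsSimplicialComplex ℕ) : Set (ℕ → ℝ) :=
  {x | (∀ i, 0 ≤ x i) ∧ ∃ σ ∈ K.faces, (∀ i, x i ≠ 0 → i ∈ σ) ∧ ∑ i ∈ σ, x i = 1}

/-- The closed simplex `|τ| ⊆ |L|` spanned by a face `τ`. -/
def closedSimplex (L : AbsSimplicialComplex ℕ) (τ : Finset ℕ) : Set (ℕ → ℝ) :=
  {x ∈ geomRealization L | ∀ i, x i ≠ 0 → i ∈ τ}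

/-- The map `ℝ^ℕ → ℝ^ℕ` induced by a vertex map `f : ℕ → ℕ`. -/
noncomputable def geomRealMap (f : ℕ → ℕ) (x : ℕ → ℝ) : ℕ → ℝ :=
  fun j => ∑ᶠ i ∈ {i | f i = j}, x i

/-- Two sums over supersets of the support agree. -/
lemma sum_eq_of_support_subset (x : ℕ → ℝ) (a b : Finset ℕ)
    (ha : ∀ i, x i ≠ 0 → i ∈ a) (hb : ∀ i, x i ≠ 0 → i ∈ b) :
    ∑ i ∈ a, x i = ∑ i ∈ b, x i := by
  have h1 : ∑ i ∈ a ∩ b, x i = ∑ i ∈ a, x i := by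
    apply Finset.sum_subset (Finset.inter_subset_left)
    intro i hia hib
    by_contra hx
    exact hib (Finset.mem_inter.2 ⟨hia, hb i hx⟩)
  have h2 : ∑ i ∈ a ∩ b, x i = ∑ i ∈ b, x i := by
    apply Finset.sum_subset (Finset.inter_subset_right)
    intro i hib hia
    by_contra hx
    exact hia (Finset.mem_inter.2 ⟨ha i hx, hib⟩)
  rw [← h1, h2]

/-- Explicit description of a closed simplex of the realization. -/
lemma closedSimplex_eq (K : AbsSimplicialComplex ℕ) (σ : Finset ℕ) (hσ : σ ∈ K.faces) :
    closedSimplex K σ =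
      {x | (∀ i, 0 ≤ x i) ∧ (∀ i, x i ≠ 0 → i ∈ σ) ∧ ∑ i ∈ σ, x i = 1} := by
  ext x
  constructor
  · rintro ⟨⟨hpos, σ', hσ', hsupp', hsum'⟩, hsupp⟩
    exact ⟨hpos, hsupp, by rw [sum_eq_of_support_subset x σ σ' hsupp hsupp']; exact hsum'⟩
  · rintro ⟨hpos, hsupp, hsum⟩
    exact ⟨⟨hpos, σ, hσ, hsupp, hsum⟩, hsupp⟩

/-- Each closed simplex of a realization is compact. -/
lemma isCompact_closedSimplex (K : AbsSimplicialComplex ℕ) (σ : Finset ℕ)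
    (hσ : σ ∈ K.faces) : IsCompact (closedSimplex K σ) := by
  rw [closedSimplex_eq K σ hσ]
  have hC : IsCompact (Set.pi Set.univ
      (fun i => if i ∈ σ then Set.Icc (0:ℝ) 1 else ({0} : Set ℝ))) := by
    apply isCompact_univ_pi
    intro i
    split
    · exact isCompact_Icc
    · exact isCompact_singleton
  apply hC.of_isClosed_subset
  · have h1 : IsClosed {x : ℕ → ℝ | ∀ i, 0 ≤ x i} := by
      have : {x : ℕ → ℝ | ∀ i, 0 ≤ x i} = ⋂ i, {x | 0 ≤ x i} := by
        ext x; simp [Set.mem_iInter]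
      rw [this]
      exact isClosed_iInter fun i => isClosed_le continuous_const (continuous_apply i)
    have h2 : IsClosed {x : ℕ → ℝ | ∀ i, x i ≠ 0 → i ∈ σ} := by
      have : {x : ℕ → ℝ | ∀ i, x i ≠ 0 → i ∈ σ} =
          ⋂ i ∈ {i | i ∉ σ}, {x : ℕ → ℝ | x i = 0} := by
        ext x
        simp only [Set.mem_iInter, Set.mem_setOf_eq]
        constructor
        · intro h i hi
          by_contra hx
          exact hi (h i hx)
        · intro h i hx
          by_contra hi
          exact hx (h i hi)
      rw [this]
      exact isClosed_biInter fun i _ => isClosed_eq (continuous_apply i) continuous_const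
    have h3 : IsClosed {x : ℕ → ℝ | ∑ i ∈ σ, x i = 1} :=
      isClosed_eq (by exact continuous_finset_sum σ fun i _ => continuous_apply i)
        continuous_const
    have : {x : ℕ → ℝ | (∀ i, 0 ≤ x i) ∧ (∀ i, x i ≠ 0 → i ∈ σ) ∧ ∑ i ∈ σ, x i = 1} =
        {x : ℕ → ℝ | ∀ i, 0 ≤ x i} ∩
          ({x : ℕ → ℝ | ∀ i, x i ≠ 0 → i ∈ σ} ∩ {x : ℕ → ℝ | ∑ i ∈ σ, x i = 1}) := rfl
    rw [this]
    exact h1.inter (h2.inter h3)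
  · rintro x ⟨hpos, hsupp, hsum⟩
    rw [Set.mem_univ_pi]
    intro i
    by_cases hi : i ∈ σ
    · simp only [hi, if_true, Set.mem_Icc]
      refine ⟨hpos i, ?_⟩
      calc x i ≤ ∑ j ∈ σ, x j := Finset.single_le_sum (fun j _ => hpos j) hi
        _ = 1 := hsum
    · simp only [hi, if_false, Set.mem_singleton_iff]
      by_contra hx
      exact hi (hsupp i hx)

/-- Support of the image point is contained in the image of the face. -/
lemma geomRealMap_support (f : ℕ → ℕ) (x : ℕ → ℝ) (σ : Finset ℕ)
    (hsupp : ∀ i, x i ≠ 0 → i ∈ σ) :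
    ∀ j, geomRealMap f x j ≠ 0 → j ∈ σ.image f := by
  intro j hj
  by_contra hjτ
  apply hj
  apply finsum_mem_of_eqOn_zero
  intro i hi
  by_contra hx
  exact hjτ (Finset.mem_image.2 ⟨i, hsupp i hx, hi⟩)

/-- if every compact subset of `|L|` meets only finitely many closed
simplices, each closed simplex of `|L|` is compact, and every simplex `τ` of `L` has
only finitely many simplices of `K` mapping into it, then the geometric realization
`|f| : |K| → |L|` of a simplicial map `f` is proper. -/
theorem stmt_19 (K L : AbsSimplicialComplex ℕ) (f : ℕ → ℕ)
    (hf : ∀ σ ∈ K.faces, σ.image f ∈ L.faces)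
    (hmaps : Set.MapsTo (geomRealMap f) (geomRealization K) (geomRealization L))
    (hcont : ContinuousOn (geomRealMap f) (geomRealization K))
    (hcpt : ∀ τ ∈ L.faces, IsCompact (closedSimplex L τ))
    (hfin : ∀ Q : Set (ℕ → ℝ), Q ⊆ geomRealization L → IsCompact Q →
      {τ ∈ L.faces | (closedSimplex L τ ∩ Q).Nonempty}.Finite)
    (hpre : ∀ τ ∈ L.faces, {σ ∈ K.faces | σ.image f ⊆ τ}.Finite) :
    IsProperMap (hmaps.restrict (geomRealMap f) (geomRealization K) (geomRealization L)) := by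
  -- Main compactness statement for ambient sets.
  have main : ∀ Q : Set (ℕ → ℝ), Q ⊆ geomRealization L → IsCompact Q →
      IsCompact (geomRealization K ∩ geomRealMap f ⁻¹' Q) := by
    intro Q hQL hQ
    have hT : {τ ∈ L.faces | (closedSimplex L τ ∩ Q).Nonempty}.Finite := hfin Q hQL hQ
    set T := {τ ∈ L.faces | (closedSimplex L τ ∩ Q).Nonempty} with hTdef
    set S := ⋃ τ ∈ T, {σ ∈ K.faces | σ.image f ⊆ τ} with hSdef
    have hS : S.Finite := hT.biUnion fun τ hτ => hpre τ hτ.1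
    have hSfaces : ∀ σ ∈ S, σ ∈ K.faces := by
      intro σ hσ
      rcases Set.mem_iUnion₂.1 hσ with ⟨τ, _, hστ⟩
      exact hστ.1
    set C := ⋃ σ ∈ S, closedSimplex K σ with hCdef
    have hC : IsCompact C :=
      hS.isCompact_biUnion fun σ hσ => isCompact_closedSimplex K σ (hSfaces σ hσ)
    have hCK : C ⊆ geomRealization K := by
      intro x hx
      rcases Set.mem_iUnion₂.1 hx with ⟨σ, _, hxσ⟩
      exact hxσ.1
    have hsub : geomRealization K ∩ geomRealMap f ⁻¹' Q ⊆ C := by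
      rintro x ⟨hx, hgx⟩
      obtain ⟨hpos, σ, hσ, hsupp, hsum⟩ := hx
      have hxK : x ∈ geomRealization K := ⟨hpos, σ, hσ, hsupp, hsum⟩
      have hτ : σ.image f ∈ L.faces := hf σ hσ
      have hgmem : geomRealMap f x ∈ closedSimplex L (σ.image f) :=
        ⟨hmaps hxK, geomRealMap_support f x σ hsupp⟩
      have hτT : σ.image f ∈ T := ⟨hτ, ⟨geomRealMap f x, hgmem, hgx⟩⟩
      have hσS : σ ∈ S := Set.mem_iUnion₂.2 ⟨σ.image f, hτT, hσ, subset_rfl⟩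
      exact Set.mem_iUnion₂.2 ⟨σ, hσS, hxK, hsupp⟩
    have heq : geomRealization K ∩ geomRealMap f ⁻¹' Q = C ∩ geomRealMap f ⁻¹' Q := by
      apply Set.Subset.antisymm
      · intro x hx
        exact ⟨hsub hx, hx.2⟩
      · rintro x ⟨hxC, hxQ⟩
        exact ⟨hCK hxC, hxQ⟩
    rw [heq]
    apply hC.of_isClosed_subset
    · exact (hcont.mono hCK).preimage_isClosed_of_isClosed hC.isClosed hQ.isClosed
    · exact Set.inter_subset_left
  -- Now prove properness via the compactly-generated criterion.
  rw [isProperMap_iff_isCompact_preimage]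
  constructor
  · exact hcont.mapsToRestrict hmaps
  · intro Q' hQ'
    have hQv : IsCompact (Subtype.val '' Q' : Set (ℕ → ℝ)) :=
      hQ'.image continuous_subtype_val
    have hQvL : (Subtype.val '' Q' : Set (ℕ → ℝ)) ⊆ geomRealization L := by
      rintro _ ⟨y, _, rfl⟩
      exact y.2
    rw [Subtype.isCompact_iff]
    have himg : Subtype.val ''
        (hmaps.restrict (geomRealMap f) (geomRealization K) (geomRealization L) ⁻¹' Q')
        = geomRealization K ∩ geomRealMap f ⁻¹' (Subtype.val '' Q') := by
      ext z
      constructor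
      · rintro ⟨x, hx, rfl⟩
        refine ⟨x.2, ?_⟩
        exact ⟨hmaps.restrict (geomRealMap f) _ _ x, hx, rfl⟩
      · rintro ⟨hzK, hzQ⟩
        refine ⟨⟨z, hzK⟩, ?_, rfl⟩
        rcases hzQ with ⟨y, hy, hyz⟩
        have : hmaps.restrict (geomRealMap f) (geomRealization K) (geomRealization L)
            ⟨z, hzK⟩ = y := by
          apply Subtype.ext
          exact hyz.symm
        rw [Set.mem_preimage, this]
        exact hy
    rw [himg]
    exact main _ hQvL hQv
end
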